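/- arXiv:2107.03268 — 3 statements merged into one kernel-verified Lean document; each statement's English description precedes it below -/
import Mathlib

section
/- Let β > 0 be a real number, let k be a nonzero integer, and let t, η be real numbers. Then (k² + (η − kt)²)^{−β} ≤ 2^β (1 + t²)^{−β} (1 + k² + η²)^{β}. -/
/-- For `β > 0`, nonzero integer `k`, and reals `t, η`,
`(k² + (η − kt)²)^{−β} ≤ 2^β (1 + t²)^{−β} (1 + k² + η²)^{β}`. -/
theorem couette_symbol_neg_rpow_bound (β : ℝ) (hβ : 0 < β) (k : ℤ) (hk : k ≠ 0)
    (t η : ℝ) :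
    ((k : ℝ) ^ 2 + (η - k * t) ^ 2) ^ (-β) ≤
      (2 : ℝ) ^ β * (1 + t ^ 2) ^ (-β) * (1 + (k : ℝ) ^ 2 + η ^ 2) ^ β := by
  have hk1 : (1 : ℝ) ≤ (k : ℝ) ^ 2 := by
    have h : (1 : ℤ) ≤ k ^ 2 := by nlinarith [Int.one_le_abs hk, sq_abs k, abs_nonneg k]
    exact_mod_cast h
  have hp : 0 < (k : ℝ) ^ 2 + (η - k * t) ^ 2 := by nlinarith [sq_nonneg (η - k*t)]
  have hQ : 0 < 1 + (k : ℝ) ^ 2 + η ^ 2 := by nlinarith [sq_nonneg η]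
  have ht : 0 < 1 + t ^ 2 := by positivity
  -- key: 1 + t² ≤ 2 * p * Q
  have key : 1 + t ^ 2 ≤ 2 * (((k : ℝ) ^ 2 + (η - k * t) ^ 2) * (1 + (k : ℝ) ^ 2 + η ^ 2)) := by
    have h1 : (k : ℝ)^2 * t^2 ≤ 2 * ((η - k*t)^2 + η^2) := by nlinarith [sq_nonneg (η - k*t + η)]
    have h2 : t^2 ≤ (k : ℝ)^2 * t^2 := by nlinarith [sq_nonneg t]
    nlinarith [sq_nonneg (η - k*t), sq_nonneg η, mul_nonneg (sq_nonneg (η - k*t)) (sq_nonneg η)]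
  have hrpow : (1 + t ^ 2) ^ β ≤
      (2 * (((k : ℝ) ^ 2 + (η - k * t) ^ 2) * (1 + (k : ℝ) ^ 2 + η ^ 2))) ^ β :=
    Real.rpow_le_rpow ht.le key hβ.le
  rw [Real.mul_rpow (by norm_num) (by positivity), Real.mul_rpow hp.le hQ.le] at hrpow
  rw [Real.rpow_neg hp.le, Real.rpow_neg ht.le]
  rw [inv_le_iff_one_le_mul₀ (by positivity)] at *
  calc (1:ℝ) = (1 + t^2)^β * ((1+t^2)^β)⁻¹ := (mul_inv_cancel₀ (by positivity)).symm
    _ ≤ 2 ^ β * (((k : ℝ)^2 + (η - k*t)^2)^β * (1 + (k : ℝ)^2 + η^2)^β) * ((1+t^2)^β)⁻¹ := by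
        gcongr
    _ = 2 ^ β * ((1+t^2)^β)⁻¹ * (1 + (k : ℝ)^2 + η^2)^β * ((k : ℝ)^2 + (η - k*t)^2)^β := by
        ring
end

section
/- Let s ∈ ℝ, β > 0, t ∈ ℝ, and let f̂ : ℤ × ℝ → ℂ be a function such that η ↦ f̂(k,η) is measurable for each k and f̂(0,η) = 0 for all η. Then ∑_{k∈ℤ} ∫_ℝ (1+k²+η²)^{s} (k²+(η−kt)²)^{−2β} |f̂(k,η)|² dη ≤ 4^β (1+t²)^{−2β} ∑_{k∈ℤ} ∫_ℝ (1+k²+η²)^{s+2β} |f̂(k,η)|² dη, and moreover (without the vanishing assumption on the zero mode) ∑_{k∈ℤ} ∫_ℝ (1+k²+η²)^{s} (k²+(η−kt)²)^{2β} |f̂(k,η)|² dη ≤ 4^β (1+t²)^{2β} ∑_{k∈ℤ} ∫_ℝ (1+k²+η²)^{s+2β} |f̂(k,η)|² dη. -/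
open MeasureTheory Real

lemma pow4 (β : ℝ) : (2:ℝ) ^ (2*β) = 4 ^ β := by
  rw [show (4:ℝ) = 2 ^ (2:ℝ) by
      rw [show (2:ℝ) = ((2:ℕ):ℝ) by norm_num, Real.rpow_natCast]; norm_num,
    ← Real.rpow_mul (by norm_num)]

lemma aux1 (β t : ℝ) (hβ : 0 < β) (k : ℤ) (hk : k ≠ 0) (η : ℝ) :
    ((k:ℝ)^2 + (η - k*t)^2) ^ (-(2*β)) ≤
      (4:ℝ)^β * (1+t^2)^(-(2*β)) * (1+(k:ℝ)^2+η^2)^(2*β) := by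
  have hk2 : (1:ℝ) ≤ (k:ℝ)^2 := by
    have h1 : (1:ℝ) ≤ |(k:ℝ)| := by exact_mod_cast Int.one_le_abs hk
    nlinarith [sq_abs (k:ℝ), abs_nonneg (k:ℝ)]
  have hP : (0:ℝ) < (k:ℝ)^2 + (η - k*t)^2 := by nlinarith [sq_nonneg (η - k*t)]
  have hA : (0:ℝ) < 1+(k:ℝ)^2+η^2 := by positivity
  have hT : (0:ℝ) < 1+t^2 := by positivity
  have hkey : 1+t^2 ≤ 2*(((k:ℝ)^2 + (η - k*t)^2)*(1+(k:ℝ)^2+η^2)) := by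
    nlinarith [sq_nonneg (η + (η - k*t)), sq_nonneg (η - k*t), sq_nonneg ((η - k*t)*η),
      mul_nonneg (sub_nonneg.2 hk2) (sq_nonneg t), mul_nonneg (sub_nonneg.2 hk2) (sq_nonneg η),
      mul_nonneg (sub_nonneg.2 hk2) (sq_nonneg (η - k*t)),
      mul_nonneg (sub_nonneg.2 hk2) (mul_nonneg (sq_nonneg (η-k*t)) (sq_nonneg η))]
  have h2β : (0:ℝ) ≤ 2*β := by linarith
  have h1 : (1+t^2)^(2*β) ≤ (2*(((k:ℝ)^2 + (η - k*t)^2)*(1+(k:ℝ)^2+η^2)))^(2*β) :=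
    Real.rpow_le_rpow hT.le hkey h2β
  rw [Real.mul_rpow (by norm_num) (by positivity), Real.mul_rpow hP.le hA.le, pow4] at h1
  have hPp : (0:ℝ) < ((k:ℝ)^2 + (η - k*t)^2)^(2*β) := Real.rpow_pos_of_pos hP _
  have hTp : (0:ℝ) < (1+t^2)^(2*β) := Real.rpow_pos_of_pos hT _
  rw [Real.rpow_neg hP.le, Real.rpow_neg hT.le,
    show (4:ℝ)^β * ((1+t^2)^(2*β))⁻¹ * (1+(k:ℝ)^2+η^2)^(2*β)
        = ((4:ℝ)^β * (1+(k:ℝ)^2+η^2)^(2*β)) / (1+t^2)^(2*β) by ring,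
    inv_eq_one_div, div_le_div_iff₀ hPp hTp]
  nlinarith [h1]

lemma aux2 (β t : ℝ) (hβ : 0 < β) (k : ℤ) (η : ℝ) :
    ((k:ℝ)^2 + (η - k*t)^2) ^ (2*β) ≤
      (4:ℝ)^β * (1+t^2)^(2*β) * (1+(k:ℝ)^2+η^2)^(2*β) := by
  have hP : (0:ℝ) ≤ (k:ℝ)^2 + (η - k*t)^2 := by positivity
  have hA : (0:ℝ) < 1+(k:ℝ)^2+η^2 := by positivity
  have hT : (0:ℝ) < 1+t^2 := by positivity
  have hkey : (k:ℝ)^2 + (η - k*t)^2 ≤ 2*((1+t^2)*(1+(k:ℝ)^2+η^2)) := by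
    nlinarith [sq_nonneg (η + (k:ℝ)*t), sq_nonneg ((k:ℝ)*t*η), sq_nonneg ((k:ℝ)*t), sq_nonneg η,
      mul_nonneg (sq_nonneg t) (sq_nonneg η)]
  have h1 := Real.rpow_le_rpow hP hkey (by linarith : (0:ℝ) ≤ 2*β)
  rwa [Real.mul_rpow (by norm_num) (by positivity), Real.mul_rpow hT.le hA.le, pow4,
    ← mul_assoc] at h1

/-- Fourier-side form of the multiplier lemma for `p^{−β}` and `p^{β}`, where
`p(t,k,η) = k² + (η − kt)²` is the symbol of the moving-frame Laplacian:
for data with vanishing `x`-average, `‖p^{−β} f‖_{H^s}² ≤ 4^β ⟨t⟩^{−4β} ‖f‖_{H^{s+2β}}²`,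
and (without the vanishing assumption) `‖p^{β} g‖_{H^s}² ≤ 4^β ⟨t⟩^{4β} ‖g‖_{H^{s+2β}}²`. -/
theorem couette_multiplier_sobolev_bound (s β t : ℝ) (hβ : 0 < β)
    (f : ℤ → ℝ → ℂ) (hf : ∀ k, Measurable (f k)) (hf0 : ∀ η, f 0 η = 0) :
    (∑' k : ℤ, ∫⁻ η : ℝ, ENNReal.ofReal
        ((1 + (k : ℝ) ^ 2 + η ^ 2) ^ s * ((k : ℝ) ^ 2 + (η - k * t) ^ 2) ^ (-(2 * β)) *
          ‖f k η‖ ^ 2)) ≤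
      ENNReal.ofReal ((4 : ℝ) ^ β * (1 + t ^ 2) ^ (-(2 * β))) *
        ∑' k : ℤ, ∫⁻ η : ℝ, ENNReal.ofReal
          ((1 + (k : ℝ) ^ 2 + η ^ 2) ^ (s + 2 * β) * ‖f k η‖ ^ 2) ∧
    ∀ g : ℤ → ℝ → ℂ, (∀ k, Measurable (g k)) →
      (∑' k : ℤ, ∫⁻ η : ℝ, ENNReal.ofReal
          ((1 + (k : ℝ) ^ 2 + η ^ 2) ^ s * ((k : ℝ) ^ 2 + (η - k * t) ^ 2) ^ (2 * β) *
            ‖g k η‖ ^ 2)) ≤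
        ENNReal.ofReal ((4 : ℝ) ^ β * (1 + t ^ 2) ^ (2 * β)) *
          ∑' k : ℤ, ∫⁻ η : ℝ, ENNReal.ofReal
            ((1 + (k : ℝ) ^ 2 + η ^ 2) ^ (s + 2 * β) * ‖g k η‖ ^ 2) := by
  constructor
  · have hC : (0:ℝ) ≤ (4:ℝ)^β * (1+t^2)^(-(2*β)) := by positivity
    calc (∑' k : ℤ, ∫⁻ η : ℝ, ENNReal.ofReal
        ((1 + (k : ℝ) ^ 2 + η ^ 2) ^ s * ((k : ℝ) ^ 2 + (η - k * t) ^ 2) ^ (-(2 * β)) *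
          ‖f k η‖ ^ 2))
        ≤ ∑' k : ℤ, ∫⁻ η : ℝ, ENNReal.ofReal
            (((4:ℝ)^β * (1+t^2)^(-(2*β))) *
              ((1 + (k : ℝ) ^ 2 + η ^ 2) ^ (s + 2 * β) * ‖f k η‖ ^ 2)) := by
          refine ENNReal.tsum_le_tsum fun k => lintegral_mono fun η => ENNReal.ofReal_le_ofReal ?_
          rcases eq_or_ne k 0 with rfl | hk
          · simp only [hf0 η, norm_zero, ne_eq, OfNat.ofNat_ne_zero, not_false_eq_true,
              zero_pow, mul_zero]
            positivity
          · have hA : (0:ℝ) < 1+(k:ℝ)^2+η^2 := by positivity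
            calc (1 + (k : ℝ) ^ 2 + η ^ 2) ^ s * ((k : ℝ) ^ 2 + (η - k * t) ^ 2) ^ (-(2 * β)) *
                  ‖f k η‖ ^ 2
                ≤ (1 + (k : ℝ) ^ 2 + η ^ 2) ^ s *
                    ((4:ℝ)^β * (1+t^2)^(-(2*β)) * (1+(k:ℝ)^2+η^2)^(2*β)) * ‖f k η‖ ^ 2 := by
                  exact mul_le_mul_of_nonneg_right (mul_le_mul_of_nonneg_left
                    (aux1 β t hβ k hk η) (by positivity)) (by positivity)
              _ = ((4:ℝ)^β * (1+t^2)^(-(2*β))) *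
                    ((1 + (k : ℝ) ^ 2 + η ^ 2) ^ (s + 2 * β) * ‖f k η‖ ^ 2) := by
                  rw [Real.rpow_add hA]; ring
      _ = ENNReal.ofReal ((4 : ℝ) ^ β * (1 + t ^ 2) ^ (-(2 * β))) *
            ∑' k : ℤ, ∫⁻ η : ℝ, ENNReal.ofReal
              ((1 + (k : ℝ) ^ 2 + η ^ 2) ^ (s + 2 * β) * ‖f k η‖ ^ 2) := by
          simp_rw [ENNReal.ofReal_mul hC, lintegral_const_mul' _ _ ENNReal.ofReal_ne_top,
            ENNReal.tsum_mul_left]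
  · intro g hg
    have hC : (0:ℝ) ≤ (4:ℝ)^β * (1+t^2)^(2*β) := by positivity
    calc (∑' k : ℤ, ∫⁻ η : ℝ, ENNReal.ofReal
        ((1 + (k : ℝ) ^ 2 + η ^ 2) ^ s * ((k : ℝ) ^ 2 + (η - k * t) ^ 2) ^ (2 * β) *
          ‖g k η‖ ^ 2))
        ≤ ∑' k : ℤ, ∫⁻ η : ℝ, ENNReal.ofReal
            (((4:ℝ)^β * (1+t^2)^(2*β)) *
              ((1 + (k : ℝ) ^ 2 + η ^ 2) ^ (s + 2 * β) * ‖g k η‖ ^ 2)) := by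
          refine ENNReal.tsum_le_tsum fun k => lintegral_mono fun η => ENNReal.ofReal_le_ofReal ?_
          have hA : (0:ℝ) < 1+(k:ℝ)^2+η^2 := by positivity
          calc (1 + (k : ℝ) ^ 2 + η ^ 2) ^ s * ((k : ℝ) ^ 2 + (η - k * t) ^ 2) ^ (2 * β) *
                ‖g k η‖ ^ 2
              ≤ (1 + (k : ℝ) ^ 2 + η ^ 2) ^ s *
                  ((4:ℝ)^β * (1+t^2)^(2*β) * (1+(k:ℝ)^2+η^2)^(2*β)) * ‖g k η‖ ^ 2 := by
                exact mul_le_mul_of_nonneg_right (mul_le_mul_of_nonneg_left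
                  (aux2 β t hβ k η) (by positivity)) (by positivity)
            _ = ((4:ℝ)^β * (1+t^2)^(2*β)) *
                  ((1 + (k : ℝ) ^ 2 + η ^ 2) ^ (s + 2 * β) * ‖g k η‖ ^ 2) := by
                rw [Real.rpow_add hA]; ring
      _ = ENNReal.ofReal ((4 : ℝ) ^ β * (1 + t ^ 2) ^ (2 * β)) *
            ∑' k : ℤ, ∫⁻ η : ℝ, ENNReal.ofReal
              ((1 + (k : ℝ) ^ 2 + η ^ 2) ^ (s + 2 * β) * ‖g k η‖ ^ 2) := by
          simp_rw [ENNReal.ofReal_mul hC, lintegral_const_mul' _ _ ENNReal.ofReal_ne_top,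
            ENNReal.tsum_mul_left]
end

section
/- Let ν > 0, let k be a nonzero integer, and let t, η be real numbers. Then ν^{1/3} / ((ν^{1/3}(t − η/k))² + 1) + ν (k² + (η − kt)²) ≥ ν^{1/3} / 2. -/
/-- Spectral-gap property of the ghost multiplier: for `ν > 0`, nonzero integer `k`
and reals `t, η`,
`ν^{1/3}/((ν^{1/3}(t − η/k))² + 1) + ν(k² + (η − kt)²) ≥ ν^{1/3}/2`. -/
theorem ghost_multiplier_spectral_gap (ν : ℝ) (hν : 0 < ν) (k : ℤ) (hk : k ≠ 0)
    (t η : ℝ) :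
    ν ^ ((1 : ℝ) / 3) / 2 ≤
      ν ^ ((1 : ℝ) / 3) / ((ν ^ ((1 : ℝ) / 3) * (t - η / (k : ℝ))) ^ 2 + 1) +
        ν * ((k : ℝ) ^ 2 + (η - k * t) ^ 2) := by
  have hkR : (k : ℝ) ≠ 0 := Int.cast_ne_zero.mpr hk
  set a := ν ^ ((1 : ℝ) / 3) with ha_def
  have ha : 0 < a := Real.rpow_pos_of_pos hν _
  have h3 : a ^ 3 = ν := by
    rw [ha_def, ← Real.rpow_natCast (ν ^ ((1:ℝ)/3)) 3, ← Real.rpow_mul hν.le]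
    norm_num
  set s := t - η / (k : ℝ) with hs_def
  have hks : η - (k : ℝ) * t = -((k : ℝ) * s) := by
    rw [hs_def, mul_sub, mul_div_assoc', mul_div_cancel_left₀ η hkR]
    ring
  have hk1 : (1 : ℝ) ≤ (k : ℝ) ^ 2 := by
    have : (1 : ℤ) ≤ k ^ 2 := by
      have := Int.one_le_abs hk
      nlinarith [sq_abs k]
    exact_mod_cast this
  clear_value a s
  rw [hks, ← h3]
  have hden : 0 < (a * s) ^ 2 + 1 := by positivity
  rcases le_or_gt ((a * s) ^ 2) 1 with h | h
  · have h1 : a / 2 ≤ a / ((a * s) ^ 2 + 1) :=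
      div_le_div_of_nonneg_left ha.le hden (by linarith)
    have h2 : 0 ≤ a ^ 3 * ((k : ℝ) ^ 2 + (-((k : ℝ) * s)) ^ 2) := by positivity
    nlinarith [h1, h2]
  · have h1 : 0 ≤ a / ((a * s) ^ 2 + 1) := by positivity
    have h2 : a * 1 < a * (a * s) ^ 2 := by
      exact mul_lt_mul_of_pos_left h ha
    nlinarith [h1, h2, mul_le_mul_of_nonneg_right hk1 (mul_nonneg (pow_nonneg ha.le 3) (sq_nonneg s)), mul_nonneg (pow_nonneg ha.le 3) (sq_nonneg (k:ℝ))]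
end
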